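/- arXiv:1802.09590 — 2 statements merged into one kernel-verified Lean document; each statement's English description precedes it below -/
import Mathlib

section
/- Let A : (a,b) → ℝ^{n×n} be measurable and locally essentially bounded, and for a < t0 ≤ t < b let Θ(t,t0) denote the unique locally absolutely continuous solution at time t of (d/ds)Θ(s,t0) = A(s)Θ(s,t0) (for almost all s), Θ(t0,t0) = I. Then the following two conditions are equivalent: (1) Θ(t,t0) is entrywise nonnegative for all a < t0 ≤ t < b; (2) A(t) is a Metzler matrix for almost all t ∈ (a,b). -/
open Matrix MeasureTheory Set Polynomial Filter

noncomputable section

/-- Number of sign changes between adjacent entries of a list of reals. -/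
def signChanges : List ℝ → ℕ
  | [] => 0
  | [_] => 0
  | a :: b :: l => (if a * b < 0 then 1 else 0) + signChanges (b :: l)

/-- `s^-(y)`: the number of sign variations in `y` after deleting all zero entries. -/
def sMinus {n : ℕ} (y : Fin n → ℝ) : ℕ :=
  signChanges ((List.ofFn y).filter (fun x => decide (x ≠ 0)))

/-- `s^+(y)`: the maximal number of sign variations in `y` after each zero entry is
replaced by either `+1` or `-1`. -/
def sPlus {n : ℕ} (y : Fin n → ℝ) : ℕ :=
  Finset.univ.sup fun ε : Fin n → Bool =>
    signChanges (List.ofFn fun i => if y i = 0 then (if ε i then (1:ℝ) else -1) else y i)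

/-- A matrix is totally positive if all its minors are positive. -/
def IsTP {n m : ℕ} (A : Matrix (Fin n) (Fin m) ℝ) : Prop :=
  ∀ (k : ℕ) (r : Fin k → Fin n) (c : Fin k → Fin m),
    StrictMono r → StrictMono c → 0 < (A.submatrix r c).det

/-- A matrix is totally nonnegative if all its minors are nonnegative. -/
def IsTN {n m : ℕ} (A : Matrix (Fin n) (Fin m) ℝ) : Prop :=
  ∀ (k : ℕ) (r : Fin k → Fin n) (c : Fin k → Fin m),
    StrictMono r → StrictMono c → 0 ≤ (A.submatrix r c).det

/-- Tridiagonal with nonnegative sub- and super-diagonal entries. -/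
def InM {n : ℕ} (A : Matrix (Fin n) (Fin n) ℝ) : Prop :=
  (∀ i j : Fin n, ((i : ℕ) + 1 < (j : ℕ) ∨ (j : ℕ) + 1 < (i : ℕ)) → A i j = 0) ∧
  (∀ i j : Fin n, ((i : ℕ) = (j : ℕ) + 1 ∨ (j : ℕ) = (i : ℕ) + 1) → 0 ≤ A i j)

/-- Tridiagonal with positive sub- and super-diagonal entries. -/
def InMPlus {n : ℕ} (A : Matrix (Fin n) (Fin n) ℝ) : Prop :=
  (∀ i j : Fin n, ((i : ℕ) + 1 < (j : ℕ) ∨ (j : ℕ) + 1 < (i : ℕ)) → A i j = 0) ∧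
  (∀ i j : Fin n, ((i : ℕ) = (j : ℕ) + 1 ∨ (j : ℕ) = (i : ℕ) + 1) → 0 < A i j)

/-- `A` is measurable and locally essentially bounded on `(a,b)` (entrywise). -/
def GoodCoeff {n : ℕ} (a b : ℝ) (A : ℝ → Matrix (Fin n) (Fin n) ℝ) : Prop :=
  (∀ i j, Measurable fun t => A t i j) ∧
  ∀ K : Set ℝ, K ⊆ Set.Ioo a b → IsCompact K →
    ∃ C : ℝ, ∀ᵐ t ∂volume, t ∈ K → ∀ i j, |A t i j| ≤ C

/-- `Φ` is the transition matrix of `ż = A(t)z` on `(a,b)`, encoded through the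
equivalent integral equation `Φ(t,t0) = I + ∫_{t0}^t A(s)Φ(s,t0) ds`. -/
def IsTransitionOn {n : ℕ} (a b : ℝ) (A : ℝ → Matrix (Fin n) (Fin n) ℝ)
    (Φ : ℝ → ℝ → Matrix (Fin n) (Fin n) ℝ) : Prop :=
  ∀ t0 ∈ Set.Ioo a b, ∀ t ∈ Set.Ioo a b, ∀ i j,
    Φ t t0 i j = (1 : Matrix (Fin n) (Fin n) ℝ) i j + ∫ s in t0..t, (A s * Φ s t0) i j




section helpers

open intervalIntegral Real Topology Metric

set_option maxHeartbeats 2000000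

lemma gronwall_aux {t0 t1 : ℝ} (h01 : t0 ≤ t1) {q : ℝ → ℝ} (hq : ContinuousOn q (Icc t0 t1))
    (hq0 : ∀ s ∈ Icc t0 t1, 0 ≤ q s) {K δ : ℝ} (hK : 0 ≤ K) (hδ : 0 ≤ δ)
    (hle : ∀ s ∈ Icc t0 t1, q s ≤ δ + ∫ u in t0..s, K * q u) :
    ∀ s ∈ Icc t0 t1, q s ≤ δ * Real.exp (K * (s - t0)) := by
  set f : ℝ → ℝ := fun u => K * q u with hf
  have hfc : ContinuousOn f (Icc t0 t1) := continuousOn_const.mul hq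
  set G : ℝ → ℝ := fun s => δ + ∫ u in t0..s, f u with hG
  have hGc : ContinuousOn G (Icc t0 t1) := by
    apply continuousOn_const.add
    have := intervalIntegral.continuousOn_primitive_interval
      (f := f) (μ := volume) (a := t0) (b := t1) ?_
    · rwa [uIcc_of_le h01] at this
    · rw [uIcc_of_le h01]
      exact hfc.integrableOn_compact isCompact_Icc
  have hG' : ∀ s ∈ Ico t0 t1, HasDerivWithinAt G (f s) (Ici s) s := by
    intro s hs
    have hmem : Icc t0 t1 ∈ 𝓝[>] s :=
      Filter.mem_of_superset (Ioo_mem_nhdsGT_of_mem ⟨le_refl s, hs.2⟩)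
        (fun x hx => ⟨hs.1.trans hx.1.le, hx.2.le⟩)
    have hii : IntervalIntegrable f volume t0 s := by
      apply ContinuousOn.intervalIntegrable
      rw [uIcc_of_le hs.1]
      exact hfc.mono (Icc_subset_Icc le_rfl hs.2.le)
    have hcw : ContinuousWithinAt f (Ioi s) s :=
      (hfc s ⟨hs.1, hs.2.le⟩).mono_of_mem_nhdsWithin hmem
    have hsm : StronglyMeasurableAtFilter f (𝓝[Ioi s] s) volume :=
      ⟨Icc t0 t1, hmem, hfc.aestronglyMeasurable measurableSet_Icc⟩
    exact (intervalIntegral.integral_hasDerivWithinAt_right hii hsm hcw).const_add δ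
  have key := norm_le_gronwallBound_of_norm_deriv_right_le (f := G) (f' := f)
    (δ := δ) (K := K) (ε := 0) (a := t0) (b := t1) hGc hG' ?_ ?_
  · intro s hs
    have h1 : q s ≤ G s := hle s hs
    have h2 : ‖G s‖ ≤ gronwallBound δ K 0 (s - t0) := key s hs
    rw [gronwallBound_ε0] at h2
    exact h1.trans ((le_abs_self _).trans h2)
  · simp [hG, Real.norm_eq_abs, abs_of_nonneg hδ]
  · intro x hx
    have hx' : x ∈ Icc t0 t1 := ⟨hx.1, hx.2.le⟩
    have hq0x := hq0 x hx'
    have hqG : q x ≤ G x := hle x hx'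
    have hG0 : 0 ≤ G x := hq0x.trans hqG
    rw [Real.norm_eq_abs, Real.norm_eq_abs, abs_of_nonneg hG0, abs_of_nonneg (by positivity : (0:ℝ) ≤ K * q x)]
    rw [add_zero]
    exact mul_le_mul_of_nonneg_left hqG hK

lemma fubini_exp {t0 s c : ℝ} (h : t0 ≤ s) {g : ℝ → ℝ}
    (hg : IntegrableOn g (Ioc t0 s) volume) :
    ∫ u in t0..s, c * Real.exp (c * u) * (∫ v in t0..u, g v) =
      Real.exp (c * s) * (∫ v in t0..s, g v) - ∫ v in t0..s, Real.exp (c * v) * g v := by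
  -- reduce to a strongly measurable representative
  obtain ⟨G, hGsm, hae⟩ := hg.aestronglyMeasurable
  have hGint : IntegrableOn G (Ioc t0 s) volume := hg.congr_fun_ae hae
  have hinner : ∀ u ∈ Icc t0 s, (∫ v in t0..u, g v) = ∫ v in t0..u, G v := by
    intro u hu
    rw [integral_of_le hu.1, integral_of_le hu.1]
    exact integral_congr_ae (ae_restrict_of_ae_restrict_of_subset (Ioc_subset_Ioc_right hu.2) hae)
  have houter : (∫ v in t0..s, Real.exp (c * v) * g v) = ∫ v in t0..s, Real.exp (c * v) * G v := by
    rw [integral_of_le h, integral_of_le h]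
    refine integral_congr_ae ?_
    filter_upwards [hae] with v hv
    rw [hv]
  have hLcongr : (∫ u in t0..s, c * Real.exp (c * u) * (∫ v in t0..u, g v))
      = ∫ u in t0..s, c * Real.exp (c * u) * (∫ v in t0..u, G v) := by
    rw [integral_of_le h, integral_of_le h]
    refine setIntegral_congr_fun measurableSet_Ioc (fun u hu => ?_)
    rw [hinner u ⟨hu.1.le, hu.2⟩]
  rw [hLcongr, houter, hinner s ⟨h, le_rfl⟩]
  clear hLcongr houter hinner hae hg
  -- now prove for measurable G
  set S : Set ℝ := Ioc t0 s with hS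
  set μ : Measure ℝ := volume.restrict S with hμ
  have hfin : IsFiniteMeasure μ := by
    constructor
    rw [hμ, Measure.restrict_apply_univ]
    exact measure_Ioc_lt_top
  set F : ℝ × ℝ → ℝ := fun p => if p.2 ≤ p.1 then c * Real.exp (c * p.1) * G p.2 else 0 with hF
  have hFsm : StronglyMeasurable F := by
    have hset : MeasurableSet {p : ℝ × ℝ | p.2 ≤ p.1} :=
      measurableSet_le measurable_snd measurable_fst
    have h1 : StronglyMeasurable (fun p : ℝ × ℝ => c * Real.exp (c * p.1) * G p.2) :=
      (((measurable_fst.const_mul c).exp.const_mul c).stronglyMeasurable).mul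
        (hGsm.comp_measurable measurable_snd)
    exact StronglyMeasurable.ite hset h1 stronglyMeasurable_const
  set M0 : ℝ := Real.exp (|c| * (|t0| + |s|)) with hM0
  have hM0pos : 0 < M0 := Real.exp_pos _
  have hexp_bdd : ∀ u ∈ S, Real.exp (c * u) ≤ M0 := by
    intro u hu
    apply Real.exp_le_exp.2
    calc c * u ≤ |c * u| := le_abs_self _
    _ = |c| * |u| := abs_mul c u
    _ ≤ |c| * (|t0| + |s|) := by
        apply mul_le_mul_of_nonneg_left _ (abs_nonneg c)
        calc |u| ≤ max |t0| |s| := abs_le_max_abs_abs hu.1.le hu.2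
        _ ≤ |t0| + |s| := max_le (le_add_of_nonneg_right (abs_nonneg s))
            (le_add_of_nonneg_left (abs_nonneg t0))
  have hFint : Integrable F (μ.prod μ) := by
    refine Integrable.mono' (g := fun p : ℝ × ℝ => (fun _ : ℝ => |c| * M0) p.1 * ‖G p.2‖)
      (Integrable.mul_prod (integrable_const _) hGint.norm) hFsm.aestronglyMeasurable ?_
    have hmp : μ.prod μ = (volume.prod volume).restrict (S ×ˢ S) := by
      rw [hμ]; exact Measure.prod_restrict S S
    rw [hmp]
    filter_upwards [ae_restrict_mem (measurableSet_Ioc.prod measurableSet_Ioc)] with p hp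
    rw [hF]
    simp only
    split_ifs with hle
    · rw [Real.norm_eq_abs, abs_mul, abs_mul, Real.norm_eq_abs]
      rw [abs_of_pos (Real.exp_pos _), mul_assoc, mul_assoc]
      refine mul_le_mul_of_nonneg_left ?_ (abs_nonneg c)
      exact mul_le_mul_of_nonneg_right (hexp_bdd p.1 hp.1) (abs_nonneg _)
    · simp only [norm_zero]
      positivity
  -- rewrite LHS as iterated integral
  rw [integral_of_le h]
  have hL : ∀ u ∈ S, c * Real.exp (c * u) * (∫ v in t0..u, G v) = ∫ v, F (u, v) ∂μ := by
    intro u hu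
    rw [integral_of_le hu.1.le]
    have hIoc : Ioc t0 u = S ∩ Iic u := by
      rw [hS]
      ext v
      constructor
      · intro hv; exact ⟨⟨hv.1, hv.2.trans hu.2⟩, hv.2⟩
      · intro hv; exact ⟨hv.1.1, hv.2⟩
    rw [hIoc, ← setIntegral_indicator measurableSet_Iic, ← MeasureTheory.integral_const_mul]
    refine integral_congr_ae (Eventually.of_forall (fun v => ?_))
    rw [hF]
    simp only [indicator_apply, mem_Iic]
    split_ifs with hvu <;> ring
  rw [setIntegral_congr_fun measurableSet_Ioc hL]
  have hswap : ∫ u, (∫ v, F (u, v) ∂μ) ∂μ = ∫ v, (∫ u, F (u, v) ∂μ) ∂μ :=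
    integral_integral_swap hFint
  rw [hswap]
  -- inner integral for fixed v
  have hR : ∀ v ∈ S, (∫ u, F (u, v) ∂μ) = (Real.exp (c * s) - Real.exp (c * v)) * G v := by
    intro v hv
    have h1 : ∀ u, F (u, v) = (Ici v).indicator (fun u => c * Real.exp (c * u) * G v) u := by
      intro u
      rw [hF]
      simp only [indicator_apply, mem_Ici]
    simp only [h1]
    rw [hμ, setIntegral_indicator measurableSet_Ici]
    have hSI : S ∩ Ici v = Icc v s := by
      rw [hS]; ext u
      constructor
      · intro hu; exact ⟨hu.2, hu.1.2⟩
      · intro hu; exact ⟨⟨hv.1.trans_le hu.1, hu.2⟩, hu.1⟩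
    rw [hSI]
    have : (∫ u in Icc v s, c * Real.exp (c * u) * G v) = (∫ u in Icc v s, c * Real.exp (c * u)) * G v := by
      rw [← MeasureTheory.integral_mul_const]
    rw [this]
    congr 1
    rw [integral_Icc_eq_integral_Ioc, ← integral_of_le hv.2]
    have hderiv : ∀ u ∈ uIcc v s, HasDerivAt (fun w => Real.exp (c * w)) (c * Real.exp (c * u)) u := by
      intro u _
      have h0 : HasDerivAt (fun w : ℝ => c * w) c u := by
        simpa using (hasDerivAt_id u).const_mul c
      simpa [mul_comm] using h0.exp
    exact integral_eq_sub_of_hasDerivAt hderiv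
      ((continuous_const.mul (Real.continuous_exp.comp (continuous_const.mul continuous_id))).intervalIntegrable v s)
  rw [setIntegral_congr_fun (μ := volume) measurableSet_Ioc hR]
  -- final algebra
  have hint2 : Integrable (fun v => Real.exp (c * v) * G v) μ := by
    refine Integrable.mono' (g := fun v => M0 * ‖G v‖) (hGint.norm.const_mul M0)
      (((((measurable_id.const_mul c).exp).stronglyMeasurable.aestronglyMeasurable)).mul
        hGint.aestronglyMeasurable) ?_
    rw [hμ]
    filter_upwards [ae_restrict_mem measurableSet_Ioc] with v hv
    rw [Real.norm_eq_abs, abs_mul, abs_of_pos (Real.exp_pos _), Real.norm_eq_abs]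
    exact mul_le_mul_of_nonneg_right (hexp_bdd v hv) (abs_nonneg _)
  have hsplit : ∀ v, (Real.exp (c * s) - Real.exp (c * v)) * G v
      = Real.exp (c * s) * G v - Real.exp (c * v) * G v := fun v => by ring
  simp only [hsplit]
  rw [integral_sub (hGint.const_mul _) hint2, MeasureTheory.integral_const_mul, integral_of_le h, integral_of_le h]

lemma wellposed {n : ℕ} {a b : ℝ} {A : ℝ → Matrix (Fin n) (Fin n) ℝ}
    {Θ : ℝ → ℝ → Matrix (Fin n) (Fin n) ℝ}
    (hm : ∀ i j, Measurable fun t => A t i j) (htrans : IsTransitionOn a b A Θ)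
    {t0 t1 C : ℝ} (hat0 : a < t0) (h01 : t0 ≤ t1) (h1b : t1 < b) (hC0 : 0 ≤ C)
    (hC : ∀ᵐ u ∂volume, u ∈ Icc t0 t1 → ∀ i j, |A u i j| ≤ C) :
    (∀ i j, IntegrableOn (fun u => (A u * Θ u t0) i j) (Ioc t0 t1) volume) ∧
    (∀ i j, ContinuousOn (fun u => Θ u t0 i j) (Icc t0 t1)) ∧
    (∀ u ∈ Icc t0 t1, ∀ i j, |Θ u t0 i j| ≤ Real.exp (((n : ℝ) * C) * (u - t0))) := by
  set f : Fin n → Fin n → ℝ → ℝ := fun i j u => (A u * Θ u t0) i j with hf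
  have ht0 : t0 ∈ Set.Ioo a b := ⟨hat0, lt_of_le_of_lt h01 h1b⟩
  have hmemIoo : ∀ u ∈ Icc t0 t1, u ∈ Set.Ioo a b :=
    fun u hu => ⟨lt_of_lt_of_le hat0 hu.1, lt_of_le_of_lt hu.2 h1b⟩
  have heq : ∀ u ∈ Icc t0 t1, ∀ i j,
      Θ u t0 i j = (if i = j then (1:ℝ) else 0) + ∫ s in t0..u, f i j s := by
    intro u hu i j
    have h2 := htrans t0 ht0 u (hmemIoo u hu) i j
    rwa [Matrix.one_apply] at h2
  -- continuity of a single entry from integrability of that entry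
  have subCont : ∀ (i j : Fin n) (s' : ℝ), s' ∈ Icc t0 t1 →
      IntegrableOn (f i j) (Ioc t0 s') volume →
      ContinuousOn (fun u => Θ u t0 i j) (Icc t0 s') := by
    intro i j s' hs' hint
    have h_int' : IntegrableOn (f i j) (Icc t0 s') volume := by
      rwa [integrableOn_Icc_iff_integrableOn_Ioc]
    have hprim : ContinuousOn (fun u => ∫ t in Ioc t0 u, f i j t) (Icc t0 s') :=
      intervalIntegral.continuousOn_primitive h_int'
    refine ContinuousOn.congr (f := fun u => (if i = j then (1:ℝ) else 0) +
      ∫ t in Ioc t0 u, f i j t) (continuousOn_const.add hprim) ?_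
    intro u hu
    have h2 := heq u ⟨hu.1, hu.2.trans hs'.2⟩ i j
    rw [intervalIntegral.integral_of_le hu.1] at h2
    exact h2
  -- integrability from measurability + boundedness
  have subL : ∀ (s' : ℝ), s' ∈ Icc t0 t1 →
      (∀ i j, AEMeasurable (fun u => Θ u t0 i j) (volume.restrict (Ioc t0 s'))) →
      (∀ i j, ∃ D, ∀ᵐ u ∂(volume.restrict (Ioc t0 s')), |Θ u t0 i j| ≤ D) →
      ∀ i j, IntegrableOn (f i j) (Ioc t0 s') volume := by
    intro s' hs' hmeasθ hbdd i j
    have hrw : (f i j) = fun u => ∑ k, A u i k * Θ u t0 k j := by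
      funext u; exact Matrix.mul_apply
    rw [hrw]
    apply MeasureTheory.integrable_finset_sum
    intro k _
    obtain ⟨D, hD⟩ := hbdd k j
    refine Integrable.mono' (g := fun _ => C * max D 0)
      (integrableOn_const measure_Ioc_lt_top.ne) ?_ ?_
    · exact (((hm i k).aemeasurable.restrict).mul (hmeasθ k j)).aestronglyMeasurable
    · filter_upwards [ae_restrict_mem measurableSet_Ioc, ae_restrict_of_ae hC, hD]
        with u hu h1 h2
      have hu' : u ∈ Icc t0 t1 := ⟨hu.1.le, hu.2.trans hs'.2⟩
      rw [Real.norm_eq_abs, abs_mul]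
      exact mul_le_mul (h1 hu' i k) (h2.trans (le_max_left D 0)) (abs_nonneg _) hC0
  -- Gronwall bound, given integrability of all entries
  have subG : ∀ (s' : ℝ), s' ∈ Icc t0 t1 →
      (∀ i j, IntegrableOn (f i j) (Ioc t0 s') volume) →
      ∀ u ∈ Icc t0 s', ∀ i j, |Θ u t0 i j| ≤ Real.exp (((n : ℝ) * C) * (u - t0)) := by
    intro s' hs' hint
    set q : ℝ → ℝ := fun u => ‖(fun ij : Fin n × Fin n => Θ u t0 ij.1 ij.2)‖ with hq
    have hqc : ContinuousOn q (Icc t0 s') := by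
      have h2 : ContinuousOn (fun u => (fun ij : Fin n × Fin n => Θ u t0 ij.1 ij.2))
          (Icc t0 s') := continuousOn_pi.2 (fun ij => subCont ij.1 ij.2 s' hs' (hint ij.1 ij.2))
      exact h2.norm
    have hq0 : ∀ u, 0 ≤ q u := fun u => norm_nonneg _
    have hentry : ∀ u i j, |Θ u t0 i j| ≤ q u := by
      intro u i j
      have h2 := norm_le_pi_norm (fun ij : Fin n × Fin n => Θ u t0 ij.1 ij.2) (i, j)
      simpa [Real.norm_eq_abs] using h2
    have hkey : ∀ u ∈ Icc t0 s', q u ≤ 1 + ∫ v in t0..u, ((n : ℝ) * C) * q v := by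
      intro u hu
      have hnn : 0 ≤ ∫ v in t0..u, ((n : ℝ) * C) * q v :=
        intervalIntegral.integral_nonneg hu.1 (fun v _ => by positivity)
      refine (pi_norm_le_iff_of_nonneg (by linarith)).2 ?_
      intro ij
      obtain ⟨i, j⟩ := ij
      rw [Real.norm_eq_abs]
      have h2 := heq u ⟨hu.1, hu.2.trans hs'.2⟩ i j
      have habs : |Θ u t0 i j| ≤ 1 + |∫ s in t0..u, f i j s| := by
        rw [h2]
        refine (abs_add_le _ _).trans ?_
        gcongr
        split_ifs <;> simp
      refine habs.trans ?_
      have hfa : IntervalIntegrable (fun v => |f i j v|) volume t0 u := by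
        rw [intervalIntegrable_iff_integrableOn_Ioc_of_le hu.1]
        exact ((hint i j).mono_set (Ioc_subset_Ioc_right hu.2)).abs
      have hga : IntervalIntegrable (fun v => ((n : ℝ) * C) * q v) volume t0 u := by
        apply ContinuousOn.intervalIntegrable
        rw [uIcc_of_le hu.1]
        exact (continuousOn_const.mul hqc).mono (Icc_subset_Icc le_rfl hu.2)
      have hae : (fun v => |f i j v|) ≤ᵐ[volume.restrict (Icc t0 u)]
          fun v => ((n : ℝ) * C) * q v := by
        filter_upwards [ae_restrict_of_ae hC, ae_restrict_mem measurableSet_Icc]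
          with v hv hvmem
        have hv' : v ∈ Icc t0 t1 := ⟨hvmem.1, hvmem.2.trans (hu.2.trans hs'.2)⟩
        have e1 : f i j v = ∑ k, A v i k * Θ v t0 k j := Matrix.mul_apply
        rw [e1]
        calc |∑ k, A v i k * Θ v t0 k j| ≤ ∑ k, |A v i k * Θ v t0 k j| :=
            Finset.abs_sum_le_sum_abs _ _
        _ ≤ ∑ _k : Fin n, C * q v := Finset.sum_le_sum (fun k _ => by
            rw [abs_mul]
            exact mul_le_mul (hv hv' i k) (hentry v k j) (abs_nonneg _) hC0)
        _ = ((n : ℝ) * C) * q v := by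
            rw [Finset.sum_const, Finset.card_univ, Fintype.card_fin, nsmul_eq_mul]
            ring
      have hmono : |∫ s in t0..u, f i j s| ≤ ∫ v in t0..u, ((n : ℝ) * C) * q v :=
        (intervalIntegral.abs_integral_le_integral_abs hu.1).trans
          (intervalIntegral.integral_mono_ae_restrict hu.1 hfa hga hae)
      linarith
    have := gronwall_aux hs'.1 hqc (fun u _ => hq0 u) (by positivity) (by norm_num) hkey
    intro u hu i j
    have h3 := this u hu
    rw [one_mul] at h3
    exact (hentry u i j).trans h3
  -- bootstrap
  set SS : Set ℝ := {t | t ∈ Icc t0 t1 ∧ ∀ i j, IntegrableOn (f i j) (Ioc t0 t) volume}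
    with hSSdef
  have ht0SS : t0 ∈ SS := ⟨⟨le_rfl, h01⟩, fun i j => by
    rw [Set.Ioc_self]; exact integrableOn_empty⟩
  have hSSne : SS.Nonempty := ⟨t0, ht0SS⟩
  have hSSbdd : BddAbove SS := ⟨t1, fun x hx => hx.1.2⟩
  set T := sSup SS with hTdef
  have hTmem : T ∈ Icc t0 t1 := ⟨le_csSup hSSbdd ht0SS, csSup_le hSSne (fun x hx => hx.1.2)⟩
  have hdownSS : ∀ x ∈ SS, ∀ y, t0 ≤ y → y ≤ x → y ∈ SS := by
    intro x hx y hy1 hy2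
    exact ⟨⟨hy1, hy2.trans hx.1.2⟩,
      fun i j => (hx.2 i j).mono_set (Ioc_subset_Ioc_right hy2)⟩
  have hIcoSS : ∀ y ∈ Ico t0 T, y ∈ SS := by
    intro y hy
    obtain ⟨x, hxSS, hxy⟩ := exists_lt_of_lt_csSup hSSne hy.2
    exact hdownSS x hxSS y hy.1 hxy.le
  have hTSS : T ∈ SS := by
    rcases le_or_gt T t0 with hT0 | hT0
    · exact ⟨hTmem, fun i j => by
        rw [Set.Ioc_eq_empty (not_lt.2 hT0)]; exact integrableOn_empty⟩
    · have hcIco : ∀ i j, ContinuousOn (fun u => Θ u t0 i j) (Ico t0 T) := by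
        intro i j u hu
        have hultm : u < (u + T) / 2 := by
          have := hu.2; simp only [mem_Ico] at hu; linarith [hu.2]
        have hmid : (u + T) / 2 < T := by
          simp only [mem_Ico] at hu; linarith [hu.2]
        have hSSs' : (u + T) / 2 ∈ SS := hIcoSS _ ⟨by linarith [hu.1], hmid⟩
        have hcont := subCont i j _ hSSs'.1 (hSSs'.2 i j)
        refine (hcont u ⟨hu.1, hultm.le⟩).mono_of_mem_nhdsWithin ?_
        refine Filter.mem_of_superset
          (inter_mem_nhdsWithin (Ico t0 T) (Iio_mem_nhds hultm)) ?_
        exact fun x hx => ⟨hx.1.1, hx.2.le⟩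
      have hres : volume.restrict (Ioc t0 T) = volume.restrict (Ioo t0 T) :=
        (Measure.restrict_congr_set Ioo_ae_eq_Ioc).symm
      refine ⟨hTmem, subL T hTmem ?_ ?_⟩
      · intro i j
        rw [hres]
        exact ((hcIco i j).mono Ioo_subset_Ico_self).aemeasurable measurableSet_Ioo
      · intro i j
        refine ⟨Real.exp (((n : ℝ) * C) * (t1 - t0)), ?_⟩
        rw [hres]
        filter_upwards [ae_restrict_mem measurableSet_Ioo] with u hu
        have huSS : u ∈ SS := hIcoSS u ⟨hu.1.le, hu.2⟩
        have h4 := subG u huSS.1 huSS.2 u ⟨hu.1.le, le_rfl⟩ i j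
        refine h4.trans (Real.exp_le_exp.2 (mul_le_mul_of_nonneg_left ?_ (by positivity)))
        have h5 : u ≤ t1 := huSS.1.2
        linarith [huSS.1.1]
  have hTt1 : T = t1 := by
    by_contra hne
    have hTlt : T < t1 := lt_of_le_of_ne hTmem.2 hne
    set g : Fin n → Fin n → ℝ := fun i j =>
      sSup {t | t ∈ Icc t0 t1 ∧ IntegrableOn (f i j) (Ioc t0 t) volume} with hgdef
    have hSij_ne : ∀ i j, ({t | t ∈ Icc t0 t1 ∧ IntegrableOn (f i j) (Ioc t0 t) volume} :
        Set ℝ).Nonempty := fun i j => ⟨t0, ⟨le_rfl, h01⟩, by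
          rw [Set.Ioc_self]; exact integrableOn_empty⟩
    have hSij_bdd : ∀ i j, BddAbove {t | t ∈ Icc t0 t1 ∧
        IntegrableOn (f i j) (Ioc t0 t) volume} := fun i j => ⟨t1, fun x hx => hx.1.2⟩
    have hglt : ∀ i j, ∀ y, t0 ≤ y → y < g i j →
        y ∈ Icc t0 t1 ∧ IntegrableOn (f i j) (Ioc t0 y) volume := by
      intro i j y hy1 hy2
      obtain ⟨x, hxS, hxy⟩ := exists_lt_of_lt_csSup (hSij_ne i j) hy2
      exact ⟨⟨hy1, hxy.le.trans hxS.1.2⟩, hxS.2.mono_set (Ioc_subset_Ioc_right hxy.le)⟩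
    have hgout : ∀ i j, ∀ y, y ∈ Icc t0 t1 → g i j < y →
        Θ y t0 i j = (if i = j then (1:ℝ) else 0) := by
      intro i j y hy hgy
      have hnotin : ¬ IntegrableOn (f i j) (Ioc t0 y) volume := by
        intro hcon
        have hymem : y ∈ {t | t ∈ Icc t0 t1 ∧ IntegrableOn (f i j) (Ioc t0 t) volume} :=
          ⟨hy, hcon⟩
        exact absurd (le_csSup (hSij_bdd i j) hymem) (not_le.2 hgy)
      have h2 := heq y hy i j
      rw [intervalIntegral.integral_of_le hy.1, MeasureTheory.integral_undef hnotin,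
        add_zero] at h2
      exact h2
    set W : Set ℝ := insert t1 {x | ∃ i j, x = g i j ∧ T < x} with hWdef
    have hWfin : W.Finite := by
      apply Set.Finite.subset
        ((Set.finite_range (fun ij : Fin n × Fin n => g ij.1 ij.2)).insert t1)
      intro x hx
      rcases Set.mem_insert_iff.1 hx with h | h
      · exact Set.mem_insert_iff.2 (Or.inl h)
      · obtain ⟨i, j, hx', _⟩ := h
        exact Set.mem_insert_iff.2 (Or.inr ⟨(i, j), hx'.symm⟩)
    have hWne : W.Nonempty := ⟨t1, mem_insert _ _⟩
    set U := sInf W with hUdef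
    have hUW : U ∈ W := hWne.csInf_mem hWfin
    have hUle : ∀ x ∈ W, U ≤ x := fun x hx => csInf_le hWfin.bddBelow hx
    have hTU : T < U := by
      rcases Set.mem_insert_iff.1 hUW with h | h
      · rw [h]; exact hTlt
      · obtain ⟨i, j, hx, hTx⟩ := h
        exact hTx
    have hUt1 : U ≤ t1 := hUle t1 (mem_insert _ _)
    set s' := (T + U) / 2 with hs'def
    have hTs' : T < s' := by rw [hs'def]; linarith
    have hs'U : s' < U := by rw [hs'def]; linarith
    have hs'mem : s' ∈ Icc t0 t1 := ⟨hTmem.1.trans hTs'.le, by linarith⟩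
    have hper : ∀ i j,
        AEMeasurable (fun u => Θ u t0 i j) (volume.restrict (Ioc t0 s')) ∧
        (∃ D, ∀ᵐ u ∂(volume.restrict (Ioc t0 s')), |Θ u t0 i j| ≤ D) := by
      intro i j
      rcases lt_or_ge T (g i j) with hgT | hgT
      · have hgW : g i j ∈ W := Or.inr ⟨i, j, rfl, hgT⟩
        have hs'g : s' < g i j := lt_of_lt_of_le hs'U (hUle _ hgW)
        have hS := hglt i j s' hs'mem.1 hs'g
        have hcont := subCont i j s' hs'mem hS.2
        constructor
        · exact (hcont.mono Ioc_subset_Icc_self).aemeasurable measurableSet_Ioc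
        · obtain ⟨D, hD⟩ := IsCompact.exists_bound_of_continuousOn isCompact_Icc hcont
          refine ⟨D, ?_⟩
          filter_upwards [ae_restrict_mem measurableSet_Ioc] with u hu
          simpa [Real.norm_eq_abs] using hD u (Ioc_subset_Icc_self hu)
      · have hbeyond : ∀ u ∈ Ioc T s', Θ u t0 i j = (if i = j then (1:ℝ) else 0) :=
          fun u hu => hgout i j u ⟨hTmem.1.trans hu.1.le, hu.2.trans hs'mem.2⟩
            (lt_of_le_of_lt hgT hu.1)
        have hcontT := subCont i j T hTmem (hTSS.2 i j)
        have hsplit : volume.restrict (Ioc t0 s')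
            = volume.restrict (Ioc t0 T) + volume.restrict (Ioc T s') := by
          rw [← Set.Ioc_union_Ioc_eq_Ioc hTmem.1 hTs'.le]
          exact Measure.restrict_union (Set.Ioc_disjoint_Ioc_of_le le_rfl) measurableSet_Ioc
        constructor
        · rw [hsplit, aemeasurable_add_measure_iff]
          constructor
          · exact (hcontT.mono Ioc_subset_Icc_self).aemeasurable measurableSet_Ioc
          · refine (aemeasurable_const (b := if i = j then (1:ℝ) else 0)).congr ?_
            filter_upwards [ae_restrict_mem measurableSet_Ioc] with u hu
            exact (hbeyond u hu).symm
        · obtain ⟨D, hD⟩ := IsCompact.exists_bound_of_continuousOn isCompact_Icc hcontT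
          refine ⟨max D 1, ?_⟩
          rw [hsplit, ae_add_measure_iff]
          constructor
          · filter_upwards [ae_restrict_mem measurableSet_Ioc] with u hu
            refine le_trans ?_ (le_max_left D 1)
            simpa [Real.norm_eq_abs] using hD u (Ioc_subset_Icc_self hu)
          · filter_upwards [ae_restrict_mem measurableSet_Ioc] with u hu
            rw [hbeyond u hu]
            split_ifs <;> simp
    have hs'SS : s' ∈ SS :=
      ⟨hs'mem, subL s' hs'mem (fun i j => (hper i j).1) (fun i j => (hper i j).2)⟩
    have : s' ≤ T := le_csSup hSSbdd hs'SS
    linarith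
  have hfull : ∀ i j, IntegrableOn (f i j) (Ioc t0 t1) volume := hTt1 ▸ hTSS.2
  exact ⟨hfull, fun i j => subCont i j t1 ⟨h01, le_rfl⟩ (hfull i j),
    subG t1 ⟨h01, le_rfl⟩ hfull⟩

lemma reverse_nonneg {n : ℕ} {a b : ℝ} {A : ℝ → Matrix (Fin n) (Fin n) ℝ}
    {Θ : ℝ → ℝ → Matrix (Fin n) (Fin n) ℝ}
    (hreg : GoodCoeff a b A) (htrans : IsTransitionOn a b A Θ)
    (hMetz : ∀ᵐ u ∂volume, u ∈ Set.Ioo a b → ∀ i j : Fin n, i ≠ j → 0 ≤ A u i j)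
    {t0 t : ℝ} (hat0 : a < t0) (h0t : t0 ≤ t) (htb : t < b) :
    ∀ i j, 0 ≤ Θ t t0 i j := by
  obtain ⟨hm, hbound⟩ := hreg
  have hsub : Icc t0 t ⊆ Set.Ioo a b := fun u hu =>
    ⟨lt_of_lt_of_le hat0 hu.1, lt_of_le_of_lt hu.2 htb⟩
  obtain ⟨C0, hC0⟩ := hbound (Icc t0 t) hsub isCompact_Icc
  set c : ℝ := max C0 0 with hcdef
  have hc0 : 0 ≤ c := le_max_right _ _
  have hC : ∀ᵐ u ∂volume, u ∈ Icc t0 t → ∀ i j, |A u i j| ≤ c := by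
    filter_upwards [hC0] with u hu hmem i j
    exact (hu hmem i j).trans (le_max_left _ _)
  obtain ⟨hint, hcont, hbnd⟩ := wellposed hm htrans hat0 h0t htb hc0 hC
  set f : Fin n → Fin n → ℝ → ℝ := fun i j u => (A u * Θ u t0) i j with hfdef
  have heq : ∀ u ∈ Icc t0 t, ∀ i j,
      Θ u t0 i j = (if i = j then (1:ℝ) else 0) + ∫ s in t0..u, f i j s := by
    intro u hu i j
    have h2 := htrans t0 (hsub ⟨le_rfl, h0t⟩) u (hsub hu) i j
    rwa [Matrix.one_apply] at h2
  have hexpc : Continuous fun u : ℝ => Real.exp (c * u) :=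
    Real.continuous_exp.comp (continuous_const.mul continuous_id)
  have hii1 : ∀ s ∈ Icc t0 t, ∀ i j : Fin n,
      IntervalIntegrable (fun u => Real.exp (c * u) * f i j u) volume t0 s := by
    intro s hs i j
    have hfs : IntegrableOn (f i j) (Ioc t0 s) volume :=
      (hint i j).mono_set (Ioc_subset_Ioc_right hs.2)
    rw [intervalIntegrable_iff_integrableOn_Ioc_of_le hs.1]
    refine Integrable.mono' (g := fun u => Real.exp (c * t) * |f i j u|)
      (hfs.abs.const_mul _) (hexpc.aestronglyMeasurable.restrict.mul
        hfs.aestronglyMeasurable) ?_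
    filter_upwards [ae_restrict_mem measurableSet_Ioc] with u hu
    rw [Real.norm_eq_abs, abs_mul, abs_of_pos (Real.exp_pos _)]
    exact mul_le_mul_of_nonneg_right
      (Real.exp_le_exp.2 (mul_le_mul_of_nonneg_left (hu.2.trans hs.2) hc0)) (abs_nonneg _)
  have hii2 : ∀ s ∈ Icc t0 t, ∀ i j : Fin n,
      IntervalIntegrable (fun u => c * Real.exp (c * u) * Θ u t0 i j) volume t0 s := by
    intro s hs i j
    apply ContinuousOn.intervalIntegrable
    rw [uIcc_of_le hs.1]
    exact ((continuousOn_const.mul hexpc.continuousOn).mul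
      ((hcont i j).mono (Icc_subset_Icc le_rfl hs.2)))
  -- the equation satisfied by ψ u i j = exp (c u) * Θ u t0 i j
  have hψ : ∀ s ∈ Icc t0 t, ∀ i j,
      Real.exp (c * s) * Θ s t0 i j
        = Real.exp (c * t0) * (if i = j then 1 else 0)
          + ∫ u in t0..s,
              (Real.exp (c * u) * f i j u + c * Real.exp (c * u) * Θ u t0 i j) := by
    intro s hs i j
    have h0s : t0 ≤ s := hs.1
    have hfs : IntegrableOn (f i j) (Ioc t0 s) volume :=
      (hint i j).mono_set (Ioc_subset_Ioc_right hs.2)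
    rw [intervalIntegral.integral_add (hii1 s hs i j) (hii2 s hs i j)]
    have hprim : ContinuousOn (fun u => ∫ v in t0..u, f i j v) (Icc t0 s) := by
      have h3 := intervalIntegral.continuousOn_primitive_interval
        (f := f i j) (μ := volume) (a := t0) (b := s) ?_
      · rwa [uIcc_of_le h0s] at h3
      · rw [uIcc_of_le h0s, integrableOn_Icc_iff_integrableOn_Ioc]
        exact hfs
    have hii2a : IntervalIntegrable
        (fun u => (if i = j then (1:ℝ) else 0) * (c * Real.exp (c * u))) volume t0 s :=
      (Continuous.intervalIntegrable (by fun_prop) t0 s)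
    have hii2b : IntervalIntegrable
        (fun u => c * Real.exp (c * u) * (∫ v in t0..u, f i j v)) volume t0 s := by
      apply ContinuousOn.intervalIntegrable
      rw [uIcc_of_le h0s]
      exact (continuousOn_const.mul hexpc.continuousOn).mul hprim
    have h2 : (∫ u in t0..s, c * Real.exp (c * u) * Θ u t0 i j)
        = (∫ u in t0..s, (if i = j then (1:ℝ) else 0) * (c * Real.exp (c * u)))
          + ∫ u in t0..s, c * Real.exp (c * u) * (∫ v in t0..u, f i j v) := by
      rw [← intervalIntegral.integral_add hii2a hii2b]
      rw [intervalIntegral.integral_of_le h0s, intervalIntegral.integral_of_le h0s]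
      refine setIntegral_congr_fun measurableSet_Ioc (fun u hu => ?_)
      rw [heq u ⟨hu.1.le, hu.2.trans hs.2⟩ i j]
      ring
    have hFTC : (∫ u in t0..s, c * Real.exp (c * u))
        = Real.exp (c * s) - Real.exp (c * t0) := by
      have hderiv : ∀ u ∈ uIcc t0 s,
          HasDerivAt (fun w => Real.exp (c * w)) (c * Real.exp (c * u)) u := by
        intro u _
        have h4 : HasDerivAt (fun w : ℝ => c * w) c u := by
          simpa using (hasDerivAt_id u).const_mul c
        simpa [mul_comm] using h4.exp
      exact integral_eq_sub_of_hasDerivAt hderiv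
        ((continuous_const.mul hexpc).intervalIntegrable t0 s)
    have hFub := fubini_exp (c := c) h0s hfs
    rw [h2, intervalIntegral.integral_const_mul, hFTC, hFub, heq s hs i j]
    ring
  -- Gronwall on the negative part
  set m : ℝ → ℝ := fun s =>
    ‖(fun ij : Fin n × Fin n => max 0 (-(Real.exp (c * s) * Θ s t0 ij.1 ij.2)))‖ with hmdef
  have hmc : ContinuousOn m (Icc t0 t) := by
    refine ContinuousOn.norm (continuousOn_pi.2 fun ij => ?_)
    exact continuousOn_const.sup ((hexpc.continuousOn.mul (hcont ij.1 ij.2)).neg)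
  have hm0 : ∀ s, 0 ≤ m s := fun s => norm_nonneg _
  have hmax_le : ∀ s (i j : Fin n), max 0 (-(Real.exp (c * s) * Θ s t0 i j)) ≤ m s := by
    intro s i j
    have h2 := norm_le_pi_norm
      (fun ij : Fin n × Fin n => max 0 (-(Real.exp (c * s) * Θ s t0 ij.1 ij.2))) (i, j)
    rw [Real.norm_eq_abs] at h2
    exact (le_abs_self _).trans h2
  set K : ℝ := (n : ℝ) * (2 * c) with hKdef
  have hK0 : 0 ≤ K := by positivity
  have hB : ∀ᵐ u ∂volume, u ∈ Icc t0 t → ∀ i k : Fin n,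
      0 ≤ A u i k + c * (if i = k then 1 else 0) ∧
      A u i k + c * (if i = k then 1 else 0) ≤ 2 * c := by
    filter_upwards [hC, hMetz] with u h1 h2 hmem i k
    have h4 := abs_le.1 (h1 hmem i k)
    by_cases hik : i = k
    · rw [if_pos hik, mul_one]
      constructor
      · linarith [h4.1]
      · linarith [h4.2]
    · rw [if_neg hik, mul_zero, add_zero]
      exact ⟨h2 (hsub hmem) i k hik, by linarith [h4.2]⟩
  have hsum : ∀ u : ℝ, ∀ i j : Fin n,
      Real.exp (c * u) * f i j u + c * Real.exp (c * u) * Θ u t0 i j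
        = ∑ k, (A u i k + c * (if i = k then 1 else 0))
            * (Real.exp (c * u) * Θ u t0 k j) := by
    intro u i j
    have e1 : f i j u = ∑ k, A u i k * Θ u t0 k j := Matrix.mul_apply
    rw [e1, Finset.mul_sum]
    simp only [add_mul, Finset.sum_add_distrib]
    congr 1
    · exact Finset.sum_congr rfl fun k _ => by ring
    · rw [Finset.sum_congr rfl (fun k _ => by
        rw [mul_ite, mul_one, mul_zero, ite_mul, zero_mul])]
      rw [Finset.sum_ite_eq]
      simp only [Finset.mem_univ, if_true]
      ring
  have hneg : ∀ s ∈ Icc t0 t, ∀ i j : Fin n,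
      -(Real.exp (c * s) * Θ s t0 i j) ≤ ∫ u in t0..s, K * m u := by
    intro s hs i j
    have h0s : t0 ≤ s := hs.1
    have hKm : IntervalIntegrable (fun u => K * m u) volume t0 s := by
      apply ContinuousOn.intervalIntegrable
      rw [uIcc_of_le h0s]
      exact continuousOn_const.mul (hmc.mono (Icc_subset_Icc le_rfl hs.2))
    have hmono : (∫ u in t0..s,
        -(Real.exp (c * u) * f i j u + c * Real.exp (c * u) * Θ u t0 i j))
        ≤ ∫ u in t0..s, K * m u := by
      refine intervalIntegral.integral_mono_ae_restrict h0s
        ((hii1 s hs i j).add (hii2 s hs i j)).neg hKm ?_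
      filter_upwards [ae_restrict_of_ae hB, ae_restrict_mem measurableSet_Icc]
        with u hBu humem
      have hBu' := hBu ⟨humem.1, humem.2.trans hs.2⟩
      rw [hsum u i j, ← Finset.sum_neg_distrib]
      calc ∑ k, -((A u i k + c * (if i = k then 1 else 0))
              * (Real.exp (c * u) * Θ u t0 k j))
          ≤ ∑ _k : Fin n, (2 * c) * m u := by
            refine Finset.sum_le_sum fun k _ => ?_
            rw [← mul_neg]
            refine le_trans (mul_le_mul_of_nonneg_left (le_max_right 0 _) (hBu' i k).1) ?_
            exact mul_le_mul (hBu' i k).2 (hmax_le u k j) (le_max_left _ _)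
              (by linarith [hc0])
        _ = K * m u := by
            rw [Finset.sum_const, Finset.card_univ, Fintype.card_fin, nsmul_eq_mul, hKdef]
            ring
    have h9 : -(Real.exp (c * s) * Θ s t0 i j)
        = -(Real.exp (c * t0) * (if i = j then 1 else 0))
          - ∫ u in t0..s,
              (Real.exp (c * u) * f i j u + c * Real.exp (c * u) * Θ u t0 i j) := by
      rw [hψ s hs i j]; ring
    have h13 : -(∫ u in t0..s,
        (Real.exp (c * u) * f i j u + c * Real.exp (c * u) * Θ u t0 i j))
        ≤ ∫ u in t0..s, K * m u := by
      rw [← intervalIntegral.integral_neg]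
      exact hmono
    have h10 : -(Real.exp (c * t0) * (if i = j then (1:ℝ) else 0)) ≤ 0 := by
      rw [neg_nonpos]
      positivity
    rw [h9]
    linarith
  have hkey : ∀ s ∈ Icc t0 t, m s ≤ 0 + ∫ u in t0..s, K * m u := by
    intro s hs
    have hnn : 0 ≤ ∫ u in t0..s, K * m u :=
      intervalIntegral.integral_nonneg hs.1 (fun u _ => mul_nonneg hK0 (hm0 u))
    rw [zero_add]
    refine (pi_norm_le_iff_of_nonneg hnn).2 fun ij => ?_
    rw [Real.norm_eq_abs, abs_of_nonneg (le_max_left _ _)]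
    exact max_le hnn (hneg s hs ij.1 ij.2)
  have hfin := gronwall_aux h0t hmc (fun s _ => hm0 s) hK0 le_rfl hkey
  intro i j
  have h11 : m t ≤ 0 := by
    have := hfin t ⟨h0t, le_rfl⟩
    simpa using this
  have h12 : -(Real.exp (c * t) * Θ t t0 i j) ≤ 0 :=
    le_trans (le_max_right 0 _) ((hmax_le t i j).trans h11)
  nlinarith [Real.exp_pos (c * t)]

lemma forward_metzler {n : ℕ} {a b : ℝ} {A : ℝ → Matrix (Fin n) (Fin n) ℝ}
    {Θ : ℝ → ℝ → Matrix (Fin n) (Fin n) ℝ}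
    (hreg : GoodCoeff a b A) (htrans : IsTransitionOn a b A Θ)
    (hpos : ∀ t0 t : ℝ, a < t0 → t0 ≤ t → t < b → ∀ i j, 0 ≤ Θ t t0 i j) :
    ∀ᵐ u ∂volume, u ∈ Set.Ioo a b → ∀ i j : Fin n, i ≠ j → 0 ≤ A u i j := by
  obtain ⟨hm, hbound⟩ := hreg
  -- main estimate on compact subintervals
  have main : ∀ α β γ : ℝ, a < α → α ≤ β → β < γ → γ < b →
      ∀ᵐ u ∂volume, u ∈ Icc α β → ∀ i j : Fin n, i ≠ j → 0 ≤ A u i j := by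
    intro α β γ haα hαβ hβγ hγb
    have hsub : Icc α γ ⊆ Set.Ioo a b := fun u hu =>
      ⟨lt_of_lt_of_le haα hu.1, lt_of_le_of_lt hu.2 hγb⟩
    obtain ⟨C0, hC0⟩ := hbound (Icc α γ) hsub isCompact_Icc
    set c : ℝ := max C0 0 with hcdef
    have hc0 : 0 ≤ c := le_max_right _ _
    have hC : ∀ᵐ u ∂volume, u ∈ Icc α γ → ∀ i j, |A u i j| ≤ c := by
      filter_upwards [hC0] with u hu hmem i j
      exact (hu hmem i j).trans (le_max_left _ _)
    -- truncated coefficient functions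
    set At : Fin n → Fin n → ℝ → ℝ := fun i j => (Icc α γ).indicator (fun u => A u i j)
      with hAtdef
    have hAtint : ∀ i j, Integrable (At i j) volume := by
      intro i j
      refine Integrable.mono' (g := (Icc α γ).indicator fun _ => c) ?_ ?_ ?_
      · rw [integrable_indicator_iff measurableSet_Icc]
        exact integrableOn_const measure_Icc_lt_top.ne
      · exact (((hm i j).indicator measurableSet_Icc).aemeasurable).aestronglyMeasurable
      · filter_upwards [hC] with u hu
        by_cases hmem : u ∈ Icc α γ
        · rw [hAtdef]
          simp only [indicator_of_mem hmem]
          exact hu hmem i j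
        · rw [hAtdef]
          simp only [indicator_of_notMem hmem]
          simp
    have hleb : ∀ᵐ x ∂volume, ∀ i j : Fin n,
        Tendsto (fun r : ℝ => ⨍ y in closedBall x r, ‖At i j y - At i j x‖)
          (𝓝[>] 0) (𝓝 0) := by
      rw [ae_all_iff]
      intro i
      rw [ae_all_iff]
      intro j
      filter_upwards [IsUnifLocDoublingMeasure.ae_tendsto_average_norm_sub
        volume ((hAtint i j).locallyIntegrable) 1] with x hx
      refine hx (fun _ => x) id tendsto_id ?_
      filter_upwards [self_mem_nhdsWithin] with r hr
      exact Metric.mem_closedBall_self (by simpa using le_of_lt hr)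
    filter_upwards [hleb] with t1 hleb1 hmem1 i j hij
    -- setup
    have hat1 : a < t1 := lt_of_lt_of_le haα hmem1.1
    have ht1γ : t1 ≤ γ := hmem1.2.trans hβγ.le
    have ht1Icc : t1 ∈ Icc α γ := ⟨hmem1.1, ht1γ⟩
    have hC' : ∀ᵐ u ∂volume, u ∈ Icc t1 γ → ∀ i j, |A u i j| ≤ c := by
      filter_upwards [hC] with u hu hmem
      exact hu ⟨hmem1.1.trans hmem.1, hmem.2⟩
    obtain ⟨hint, hcont, hbnd⟩ := wellposed hm htrans hat1 ht1γ hγb hc0 hC'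
    set f : Fin n → Fin n → ℝ → ℝ := fun i j u => (A u * Θ u t1) i j with hfdef
    have heq : ∀ u ∈ Icc t1 γ, ∀ k l : Fin n,
        Θ u t1 k l = (if k = l then (1:ℝ) else 0) + ∫ s in t1..u, f k l s := by
      intro u hu k l
      have h2 := htrans t1 (hsub ht1Icc) u (hsub ⟨hmem1.1.trans hu.1, hu.2⟩) k l
      rwa [Matrix.one_apply] at h2
    set M : ℝ := Real.exp (((n:ℝ) * c) * (γ - α)) with hMdef
    have hαγ : α ≤ γ := hαβ.trans hβγ.le
    have hM1 : 1 ≤ M := Real.one_le_exp (mul_nonneg (by positivity) (by linarith))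
    have hMb : ∀ v ∈ Icc t1 γ, ∀ k l, |Θ v t1 k l| ≤ M := by
      intro v hv k l
      refine (hbnd v hv k l).trans (Real.exp_le_exp.2 ?_)
      have h3 : v - t1 ≤ γ - α := by
        have := hv.2
        have := hmem1.1
        linarith
      exact mul_le_mul_of_nonneg_left h3 (by positivity)
    -- step 1 : |Θ - I| ≤ n c M (u - t1) on [t1, γ]
    have hstep1 : ∀ u ∈ Icc t1 γ, ∀ k l : Fin n,
        |Θ u t1 k l - (if k = l then (1:ℝ) else 0)| ≤ ((n:ℝ) * c * M) * (u - t1) := by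
      intro u hu k l
      have h2 : Θ u t1 k l - (if k = l then (1:ℝ) else 0) = ∫ s in t1..u, f k l s := by
        rw [heq u hu k l]; ring
      rw [h2]
      have hfa : IntervalIntegrable (fun v => |f k l v|) volume t1 u := by
        rw [intervalIntegrable_iff_integrableOn_Ioc_of_le hu.1]
        exact ((hint k l).mono_set (Ioc_subset_Ioc_right hu.2)).abs
      have hga : IntervalIntegrable (fun _ : ℝ => (n:ℝ) * c * M) volume t1 u :=
        intervalIntegrable_const
      have hae : (fun v => |f k l v|) ≤ᵐ[volume.restrict (Icc t1 u)]
          fun _ => (n:ℝ) * c * M := by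
        filter_upwards [ae_restrict_of_ae hC', ae_restrict_mem measurableSet_Icc]
          with v hv hvmem
        have hv' : v ∈ Icc t1 γ := ⟨hvmem.1, hvmem.2.trans hu.2⟩
        have e1 : f k l v = ∑ p, A v k p * Θ v t1 p l := Matrix.mul_apply
        rw [e1]
        calc |∑ p, A v k p * Θ v t1 p l| ≤ ∑ p, |A v k p * Θ v t1 p l| :=
            Finset.abs_sum_le_sum_abs _ _
        _ ≤ ∑ _p : Fin n, c * M := Finset.sum_le_sum (fun p _ => by
            rw [abs_mul]
            exact mul_le_mul (hv hv' k p) (hMb v hv' p l) (abs_nonneg _) hc0)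
        _ = (n:ℝ) * c * M := by
            rw [Finset.sum_const, Finset.card_univ, Fintype.card_fin, nsmul_eq_mul]
            ring
      calc |∫ s in t1..u, f k l s| ≤ ∫ v in t1..u, |f k l v| :=
          intervalIntegral.abs_integral_le_integral_abs hu.1
      _ ≤ ∫ _v in t1..u, (n:ℝ) * c * M :=
          intervalIntegral.integral_mono_ae_restrict hu.1 hfa hga hae
      _ = ((n:ℝ) * c * M) * (u - t1) := by
          rw [intervalIntegral.integral_const, smul_eq_mul]
          ring
    set L : ℝ := (n:ℝ) * c * ((n:ℝ) * c * M) with hLdef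
    have hL0 : 0 ≤ L := by positivity
    -- the per-radius estimate
    have est : ∀ r : ℝ, 0 < r → r ≤ γ - t1 →
        -(L * r) - 2 * (⨍ y in closedBall t1 r, ‖At i j y - At i j t1‖) ≤ A t1 i j := by
      intro r hr hrγ
      set t := t1 + r with htdef
      have ht1t : t1 < t := by rw [htdef]; linarith
      have htγ : t ≤ γ := by rw [htdef]; linarith
      have htIcc : t ∈ Icc t1 γ := ⟨ht1t.le, htγ⟩
      have hIsub : Ioc t1 t ⊆ Icc α γ := fun v hv =>
        ⟨hmem1.1.trans hv.1.le, hv.2.trans htγ⟩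
      -- nonnegativity of the transition matrix entry
      have hpos' : 0 ≤ Θ t t1 i j := hpos t1 t hat1 ht1t.le (lt_of_le_of_lt htγ hγb) i j
      have hI : 0 ≤ ∫ s in t1..t, f i j s := by
        have h2 := heq t htIcc i j
        rw [if_neg hij, zero_add] at h2
        rw [← h2]
        exact hpos'
      -- integrabilities on Ioc t1 t
      have hfint : IntegrableOn (f i j) (Ioc t1 t) volume :=
        (hint i j).mono_set (Ioc_subset_Ioc_right htγ)
      have hAint : IntegrableOn (fun u => A u i j) (Ioc t1 t) volume := by
        refine (((hAtint i j).integrableOn).congr_fun ?_ measurableSet_Ioc :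
          IntegrableOn _ _ volume)
        intro v hv
        rw [hAtdef]
        simp only [indicator_of_mem (hIsub hv)]
      have hsplit : (∫ s in t1..t, f i j s)
          = (∫ s in t1..t, (f i j s - A s i j)) + ((∫ s in t1..t, (A s i j - A t1 i j))
            + r * A t1 i j) := by
        have e1 : (∫ s in t1..t, (f i j s - A s i j))
            = (∫ s in t1..t, f i j s) - ∫ s in t1..t, A s i j := by
          apply intervalIntegral.integral_sub
          · rw [intervalIntegrable_iff_integrableOn_Ioc_of_le ht1t.le]; exact hfint
          · rw [intervalIntegrable_iff_integrableOn_Ioc_of_le ht1t.le]; exact hAint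
        have e2 : (∫ s in t1..t, (A s i j - A t1 i j))
            = (∫ s in t1..t, A s i j) - ∫ _s in t1..t, A t1 i j := by
          apply intervalIntegral.integral_sub
          · rw [intervalIntegrable_iff_integrableOn_Ioc_of_le ht1t.le]; exact hAint
          · exact intervalIntegrable_const
        have e3 : (∫ _s in t1..t, A t1 i j) = r * A t1 i j := by
          rw [intervalIntegral.integral_const, smul_eq_mul, htdef]
          ring
        rw [e1, e2, e3]
        ring
      -- bound the first error term
      have hbound1 : (∫ s in t1..t, (f i j s - A s i j)) ≤ (L * r) * r := by
        have hfa : IntervalIntegrable (fun s => f i j s - A s i j) volume t1 t := by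
          rw [intervalIntegrable_iff_integrableOn_Ioc_of_le ht1t.le]
          exact hfint.sub hAint
        have hae : (fun s => f i j s - A s i j) ≤ᵐ[volume.restrict (Icc t1 t)]
            fun _ => L * r := by
          filter_upwards [ae_restrict_of_ae hC', ae_restrict_mem measurableSet_Icc]
            with v hv hvmem
          have hv' : v ∈ Icc t1 γ := ⟨hvmem.1, hvmem.2.trans htγ⟩
          have e1 : f i j v - A v i j = ∑ p, A v i p * (Θ v t1 p j -
              (if p = j then (1:ℝ) else 0)) := by
            have e0 : f i j v = ∑ p, A v i p * Θ v t1 p j := Matrix.mul_apply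
            rw [e0]
            rw [Finset.sum_congr rfl (fun p _ => mul_sub (A v i p) (Θ v t1 p j) _)]
            rw [Finset.sum_sub_distrib]
            congr 1
            rw [Finset.sum_congr rfl (fun p _ => by
              rw [mul_ite, mul_one, mul_zero])]
            rw [Finset.sum_ite_eq']
            simp
          rw [e1]
          calc ∑ p, A v i p * (Θ v t1 p j - (if p = j then (1:ℝ) else 0))
              ≤ ∑ p, |A v i p * (Θ v t1 p j - (if p = j then (1:ℝ) else 0))| :=
              Finset.sum_le_sum fun p _ => le_abs_self _
          _ ≤ ∑ _p : Fin n, c * (((n:ℝ) * c * M) * r) := by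
              refine Finset.sum_le_sum fun p _ => ?_
              rw [abs_mul]
              refine mul_le_mul (hv hv' i p) ?_ (abs_nonneg _) hc0
              refine (hstep1 v hv' p j).trans ?_
              have h5 : v - t1 ≤ r := by
                have := hvmem.2
                rw [htdef] at this
                linarith
              exact mul_le_mul_of_nonneg_left h5 (by positivity)
          _ = L * r := by
              rw [Finset.sum_const, Finset.card_univ, Fintype.card_fin, nsmul_eq_mul,
                hLdef]
              ring
        calc (∫ s in t1..t, (f i j s - A s i j)) ≤ ∫ _s in t1..t, L * r :=
            intervalIntegral.integral_mono_ae_restrict ht1t.le hfa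
              intervalIntegrable_const hae
        _ = (L * r) * r := by
            rw [intervalIntegral.integral_const, smul_eq_mul, htdef]
            ring
      -- bound the second error term via the averaged difference
      have hcb : Ioc t1 t ⊆ closedBall t1 r := by
        intro v hv
        rw [Metric.mem_closedBall, Real.dist_eq, abs_of_nonneg (by linarith [hv.1.le] :
          (0:ℝ) ≤ v - t1)]
        have := hv.2
        rw [htdef] at this
        linarith
      have hnorm_int : IntegrableOn (fun y => ‖At i j y - At i j t1‖)
          (closedBall t1 r) volume :=
        (((hAtint i j).integrableOn.sub
          (integrableOn_const measure_closedBall_lt_top.ne)).norm)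
      have hbound2 : (∫ s in t1..t, (A s i j - A t1 i j))
          ≤ 2 * r * (⨍ y in closedBall t1 r, ‖At i j y - At i j t1‖) := by
        have h6 : (∫ s in t1..t, (A s i j - A t1 i j))
            ≤ ∫ s in Ioc t1 t, ‖At i j s - At i j t1‖ := by
          rw [intervalIntegral.integral_of_le ht1t.le]
          refine setIntegral_mono_on (hAint.sub (integrable_const _))
            (hnorm_int.mono_set hcb) measurableSet_Ioc ?_
          intro v hv
          have e4 : At i j v = A v i j := by
            rw [hAtdef]; simp only [indicator_of_mem (hIsub hv)]
          have e5 : At i j t1 = A t1 i j := by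
            rw [hAtdef]; simp only [indicator_of_mem ht1Icc]
          rw [Real.norm_eq_abs, e4, e5]
          exact le_abs_self _
        have h7 : (∫ s in Ioc t1 t, ‖At i j s - At i j t1‖)
            ≤ ∫ y in closedBall t1 r, ‖At i j y - At i j t1‖ := by
          refine setIntegral_mono_set hnorm_int ?_ (HasSubset.Subset.eventuallyLE hcb)
          filter_upwards with y using norm_nonneg _
        have h8 : (∫ y in closedBall t1 r, ‖At i j y - At i j t1‖)
            = 2 * r * (⨍ y in closedBall t1 r, ‖At i j y - At i j t1‖) := by
          rw [setAverage_eq, measureReal_def, Real.volume_closedBall, ENNReal.toReal_ofReal (by linarith),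
            smul_eq_mul, ← mul_assoc]
          rw [mul_inv_cancel₀ (by linarith), one_mul]
        linarith
      -- combine
      have hcomb : 0 ≤ (L * r) * r + (2 * r * (⨍ y in closedBall t1 r,
          ‖At i j y - At i j t1‖) + r * A t1 i j) := by
        rw [hsplit] at hI
        have := hbound1
        have := hbound2
        linarith
      nlinarith [hcomb, hr]
    -- pass to the limit r → 0+
    have hev : ∀ᶠ r in 𝓝[>] (0:ℝ),
        -(L * r) - 2 * (⨍ y in closedBall t1 r, ‖At i j y - At i j t1‖) ≤ A t1 i j := by
      have hIocmem : Ioc (0:ℝ) (γ - t1) ∈ 𝓝[>] (0:ℝ) :=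
        Ioc_mem_nhdsGT_of_mem ⟨le_rfl, by
          have := hmem1.2
          linarith⟩
      filter_upwards [hIocmem] with r hr
      exact est r hr.1 hr.2
    have htend : Tendsto (fun r : ℝ =>
        -(L * r) - 2 * (⨍ y in closedBall t1 r, ‖At i j y - At i j t1‖))
        (𝓝[>] 0) (𝓝 0) := by
      have h1 : Tendsto (fun r : ℝ => -(L * r)) (𝓝[>] (0:ℝ)) (𝓝 0) := by
        have : Tendsto (fun r : ℝ => -(L * r)) (𝓝 (0:ℝ)) (𝓝 (-(L * 0))) :=
          (continuous_const.mul continuous_id).neg.tendsto 0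
        rw [mul_zero, neg_zero] at this
        exact this.mono_left nhdsWithin_le_nhds
      have h2 : Tendsto (fun r : ℝ =>
          2 * (⨍ y in closedBall t1 r, ‖At i j y - At i j t1‖)) (𝓝[>] (0:ℝ)) (𝓝 0) := by
        have := (hleb1 i j).const_mul (2:ℝ)
        rwa [mul_zero] at this
      have := h1.sub h2
      rwa [sub_zero] at this
    exact le_of_tendsto htend hev
  -- assemble over a countable family of compact subintervals
  rw [ae_iff]
  set Bad : Set ℝ := {u | ¬(u ∈ Set.Ioo a b → ∀ i j : Fin n, i ≠ j → 0 ≤ A u i j)}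
    with hBadDef
  have hcover : Bad ⊆ ⋃ p : ℚ × ℚ,
      (if (a < (p.1:ℝ) ∧ (p.1:ℝ) ≤ (p.2:ℝ) ∧ ((p.2:ℝ)) < b) then Bad ∩ Icc (p.1:ℝ) (p.2:ℝ)
        else (∅ : Set ℝ)) := by
    intro u hu
    have hu' : u ∈ Set.Ioo a b := by
      by_contra h
      exact hu (fun h' _ _ _ => absurd h' h)
    obtain ⟨q, hq1, hq2⟩ := exists_rat_btwn hu'.1
    obtain ⟨p, hp1, hp2⟩ := exists_rat_btwn hu'.2
    refine Set.mem_iUnion.2 ⟨(q, p), ?_⟩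
    rw [if_pos ⟨hq1, by linarith, hp2⟩]
    exact ⟨hu, ⟨hq2.le, hp1.le⟩⟩
  refine measure_mono_null hcover (measure_iUnion_null fun p => ?_)
  split_ifs with hcond
  · obtain ⟨h1, h2, h3⟩ := hcond
    have hγ : ((p.2:ℝ) + b) / 2 < b := by linarith
    have hβγ : (p.2:ℝ) < ((p.2:ℝ) + b) / 2 := by linarith
    have hmain := main (p.1:ℝ) (p.2:ℝ) (((p.2:ℝ) + b) / 2) h1 h2 hβγ hγ
    rw [ae_iff] at hmain
    refine measure_mono_null ?_ hmain
    intro u hu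
    show ¬(u ∈ Icc (p.1:ℝ) (p.2:ℝ) → ∀ i j : Fin n, i ≠ j → 0 ≤ A u i j)
    intro hctr
    exact hu.1 (fun _ => hctr hu.2)
  · simp

end helpers

/-- For a measurable locally essentially bounded `A` on `(a,b)` with
transition matrix `Θ`, the matrix `Θ(t,t0)` is entrywise nonnegative for all
`a < t0 ≤ t < b` iff `A(t)` is Metzler for almost all `t ∈ (a,b)`. -/
theorem stmt9 {n : ℕ} (a b : ℝ) (A : ℝ → Matrix (Fin n) (Fin n) ℝ)
    (Θ : ℝ → ℝ → Matrix (Fin n) (Fin n) ℝ)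
    (hreg : GoodCoeff a b A) (htrans : IsTransitionOn a b A Θ) :
    (∀ t0 t : ℝ, a < t0 → t0 ≤ t → t < b → ∀ i j, 0 ≤ Θ t t0 i j) ↔
    (∀ᵐ t ∂volume, t ∈ Set.Ioo a b → ∀ i j : Fin n, i ≠ j → 0 ≤ A t i j) := by
  constructor
  · intro hpos
    exact forward_metzler hreg htrans hpos
  · intro hMetz t0 t hat0 h0t htb i j
    exact reverse_nonneg hreg htrans hMetz hat0 h0t htb i j

end
end

section
/- Let n ≥ 2 and let A ∈ ℝ^{n×n} be a matrix in M^+, i.e. tridiagonal with positive entries on the sub- and super-diagonal. Then for every p ∈ {1,…,n} the p-th additive compound matrix A^{[p]} is Metzler and irreducible. -/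
open Matrix MeasureTheory Set Polynomial Filter

noncomputable section

/-- The `p`-th multiplicative compound of `A`: the matrix of all `p × p` minors of `A`,
indexed by the strictly increasing selections of `p` rows/columns. -/
def mulCompound {n : ℕ} (p : ℕ) (A : Matrix (Fin n) (Fin n) ℝ) :
    Matrix {s : Fin p → Fin n // StrictMono s} {s : Fin p → Fin n // StrictMono s} ℝ :=
  Matrix.of fun α β => (A.submatrix α.1 β.1).det

/-- The `p`-th additive compound of `A`: `A^{[p]} = (d/dh) (I + hA)^{(p)} |_{h=0}`. -/
def addCompound {n : ℕ} (p : ℕ) (A : Matrix (Fin n) (Fin n) ℝ) :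
    Matrix {s : Fin p → Fin n // StrictMono s} {s : Fin p → Fin n // StrictMono s} ℝ :=
  Matrix.of fun α β => deriv (fun h : ℝ => mulCompound p (1 + h • A) α β) 0

lemma hasDerivAt_det_affine {p : ℕ} (M C : Matrix (Fin p) (Fin p) ℝ) :
    HasDerivAt (fun h : ℝ => (M + h • C).det)
      (∑ σ : Equiv.Perm (Fin p), ((Equiv.Perm.sign σ : ℤ) : ℝ) *
        ∑ j : Fin p, (∏ i ∈ Finset.univ.erase j, M (σ i) i) * C (σ j) j) 0 := by
  have key : ∀ σ : Equiv.Perm (Fin p),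
      HasDerivAt (fun h : ℝ => ∏ i : Fin p, (M (σ i) i + h * C (σ i) i))
        (∑ j : Fin p, (∏ i ∈ Finset.univ.erase j, M (σ i) i) * C (σ j) j) 0 := by
    intro σ
    have h1 : ∀ i ∈ Finset.univ, HasDerivAt (fun h : ℝ => M (σ i) i + h * C (σ i) i)
        (C (σ i) i) (0:ℝ) := fun i _ => (hasDerivAt_mul_const _).const_add _
    have h2 := HasDerivAt.fun_finset_prod h1
    refine h2.congr_deriv ?_
    simp [smul_eq_mul]
  have main : HasDerivAt
      (fun h : ℝ => ∑ σ : Equiv.Perm (Fin p), ((Equiv.Perm.sign σ : ℤ) : ℝ) *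
        ∏ i : Fin p, (M (σ i) i + h * C (σ i) i))
      (∑ σ : Equiv.Perm (Fin p), ((Equiv.Perm.sign σ : ℤ) : ℝ) *
        ∑ j : Fin p, (∏ i ∈ Finset.univ.erase j, M (σ i) i) * C (σ j) j) 0 :=
    HasDerivAt.fun_sum fun σ _ => (key σ).const_mul _
  have heq : (fun h : ℝ => (M + h • C).det) = fun h : ℝ =>
      ∑ σ : Equiv.Perm (Fin p), ((Equiv.Perm.sign σ : ℤ) : ℝ) *
        ∏ i : Fin p, (M (σ i) i + h * C (σ i) i) := by
    funext h
    rw [Matrix.det_apply']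
    simp [Matrix.add_apply, Matrix.smul_apply, smul_eq_mul, mul_comm]
  rw [heq]
  exact main

lemma addCompound_eq {n p : ℕ} (A : Matrix (Fin n) (Fin n) ℝ)
    (α β : {s : Fin p → Fin n // StrictMono s}) :
    addCompound p A α β = ∑ σ : Equiv.Perm (Fin p), ∑ j : Fin p,
      ((Equiv.Perm.sign σ : ℤ) : ℝ) *
        ((∏ i ∈ Finset.univ.erase j, (1 : Matrix (Fin n) (Fin n) ℝ) (α.1 (σ i)) (β.1 i)) *
          A (α.1 (σ j)) (β.1 j)) := by
  have heq : (fun h : ℝ => mulCompound p (1 + h • A) α β)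
      = fun h : ℝ => ((1 : Matrix (Fin n) (Fin n) ℝ).submatrix α.1 β.1
          + h • A.submatrix α.1 β.1).det := by
    funext h
    simp [mulCompound, Matrix.submatrix_add, Matrix.submatrix_smul]
  rw [addCompound, Matrix.of_apply, heq,
    (hasDerivAt_det_affine ((1 : Matrix (Fin n) (Fin n) ℝ).submatrix α.1 β.1)
      (A.submatrix α.1 β.1)).deriv]
  simp [Finset.mul_sum, Matrix.submatrix_apply]

-- a strictly monotone permutation of Fin p is the identity (as a function)
lemma perm_strictMono_eq_id {p : ℕ} (σ : Equiv.Perm (Fin p)) (h : StrictMono σ) :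
    ∀ i, σ i = i := by
  have := (StrictMono.range_inj h strictMono_id).mp
    (by rw [Set.range_id]; exact σ.surjective.range_eq)
  intro i; exact congrFun this i

lemma term_nonneg {n p : ℕ} {A : Matrix (Fin n) (Fin n) ℝ} (hA : InMPlus A)
    {α β : Fin p → Fin n} (hα : StrictMono α) (hβ : StrictMono β) (hne : α ≠ β)
    (σ : Equiv.Perm (Fin p)) (j : Fin p) :
    0 ≤ ((Equiv.Perm.sign σ : ℤ) : ℝ) *
      ((∏ i ∈ Finset.univ.erase j, (1 : Matrix (Fin n) (Fin n) ℝ) (α (σ i)) (β i)) *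
        A (α (σ j)) (β j)) := by
  by_cases hall : ∀ i, i ≠ j → α (σ i) = β i
  · have hprod : (∏ i ∈ Finset.univ.erase j,
        (1 : Matrix (Fin n) (Fin n) ℝ) (α (σ i)) (β i)) = 1 := by
      apply Finset.prod_eq_one
      intro i hi
      rw [hall i (Finset.ne_of_mem_erase hi)]
      exact Matrix.one_apply_eq _
    rw [hprod, one_mul]
    -- α (σ j) ≠ β j
    have hne2 : α (σ j) ≠ β j := by
      intro h
      have hall' : ∀ i, α (σ i) = β i := by
        intro i
        by_cases hij : i = j
        · subst hij; exact h
        · exact hall i hij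
      have hmono : StrictMono σ := by
        intro x y hxy
        have : α (σ x) < α (σ y) := by rw [hall' x, hall' y]; exact hβ hxy
        exact hα.lt_iff_lt.mp this
      apply hne
      funext i
      have := hall' i
      rwa [perm_strictMono_eq_id σ hmono i] at this
    -- injectivity facts
    have hinj : ∀ i, i ≠ j → α (σ i) ≠ α (σ j) := by
      intro i hij h
      exact hij (σ.injective (hα.injective h))
    by_cases hadj : ((β j : ℕ) = (α (σ j) : ℕ) + 1 ∨ (α (σ j) : ℕ) = (β j : ℕ) + 1)
    · -- adjacent: σ is strictly monotone, hence identity; sign = 1, entry > 0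
      have hmono : StrictMono σ := by
        intro x y hxy
        rcases eq_or_ne x j with hxj | hx
        · rcases eq_or_ne y j with hyj | hy
          · rw [hxj, hyj] at hxy
            exact absurd hxy (lt_irrefl _)
          · -- x = j < y : want σ j < σ y
            rw [hxj]
            have hxy : j < y := hxj ▸ hxy
            apply hα.lt_iff_lt.mp
            have h1 : (α (σ y) : ℕ) = (β y : ℕ) := congrArg Fin.val (hall y hy)
            have h2 : (β j : ℕ) < (β y : ℕ) := hβ hxy
            have h3 : (α (σ y) : ℕ) ≠ (α (σ j) : ℕ) :=
              fun h => hinj y hy (Fin.val_injective h)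
            rw [Fin.lt_def]
            omega
        · rcases eq_or_ne y j with hyj | hy
          · -- x < j = y : want σ x < σ j
            rw [hyj]
            have hxy : x < j := hyj ▸ hxy
            apply hα.lt_iff_lt.mp
            have h1 : (α (σ x) : ℕ) = (β x : ℕ) := congrArg Fin.val (hall x hx)
            have h2 : (β x : ℕ) < (β j : ℕ) := hβ hxy
            have h3 : (α (σ x) : ℕ) ≠ (α (σ j) : ℕ) :=
              fun h => hinj x hx (Fin.val_injective h)
            rw [Fin.lt_def]
            omega
          · apply hα.lt_iff_lt.mp
            rw [hall x hx, hall y hy]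
            exact hβ hxy
      obtain rfl : σ = 1 := Equiv.ext (perm_strictMono_eq_id σ hmono)
      simp only [Equiv.Perm.sign_one, Units.val_one, Int.cast_one, one_mul,
        Equiv.Perm.coe_one, id_eq]
      apply le_of_lt
      apply hA.2
      simp only [Equiv.Perm.coe_one, id_eq] at hadj
      tauto
    · -- far apart: A entry is zero
      have hzero : A (α (σ j)) (β j) = 0 := by
        apply hA.1
        have h4 : (α (σ j) : ℕ) ≠ (β j : ℕ) := fun h => hne2 (Fin.val_injective h)
        push_neg at hadj
        omega
      simp [hzero]
  · push_neg at hall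
    obtain ⟨i, hij, hi⟩ := hall
    have hprod : (∏ i ∈ Finset.univ.erase j,
        (1 : Matrix (Fin n) (Fin n) ℝ) (α (σ i)) (β i)) = 0 := by
      apply Finset.prod_eq_zero (Finset.mem_erase.mpr ⟨hij, Finset.mem_univ i⟩)
      exact Matrix.one_apply_ne hi
    rw [hprod, zero_mul, mul_zero]

lemma addCompound_nonneg {n p : ℕ} {A : Matrix (Fin n) (Fin n) ℝ} (hA : InMPlus A)
    (α β : {s : Fin p → Fin n // StrictMono s}) (hne : α ≠ β) :
    0 ≤ addCompound p A α β := by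
  rw [addCompound_eq]
  refine Finset.sum_nonneg fun σ _ => Finset.sum_nonneg fun j _ => ?_
  exact term_nonneg hA α.2 β.2 (fun h => hne (Subtype.ext h)) σ j

lemma addCompound_pos {n p : ℕ} {A : Matrix (Fin n) (Fin n) ℝ} (hA : InMPlus A)
    (α β : {s : Fin p → Fin n // StrictMono s}) (k : Fin p)
    (hk : ∀ i, i ≠ k → α.1 i = β.1 i)
    (hadj : ((β.1 k : ℕ) = (α.1 k : ℕ) + 1 ∨ (α.1 k : ℕ) = (β.1 k : ℕ) + 1)) :
    0 < addCompound p A α β := by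
  have hne : α ≠ β := by
    intro h
    rw [h] at hadj
    omega
  rw [addCompound_eq]
  apply Finset.sum_pos'
  · intro σ _
    exact Finset.sum_nonneg fun j _ =>
      term_nonneg hA α.2 β.2 (fun h => hne (Subtype.ext h)) σ j
  · refine ⟨1, Finset.mem_univ _, Finset.sum_pos' (fun j _ =>
      term_nonneg hA α.2 β.2 (fun h => hne (Subtype.ext h)) 1 j) ⟨k, Finset.mem_univ _, ?_⟩⟩
    have hprod : (∏ i ∈ Finset.univ.erase k,
        (1 : Matrix (Fin n) (Fin n) ℝ) (α.1 ((1 : Equiv.Perm (Fin p)) i)) (β.1 i)) = 1 := by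
      apply Finset.prod_eq_one
      intro i hi
      simp [Matrix.one_apply, hk i (Finset.ne_of_mem_erase hi)]
    rw [hprod]
    simp only [Equiv.Perm.sign_one, Units.val_one, Int.cast_one, one_mul,
      Equiv.Perm.coe_one, id_eq]
    exact hA.2 _ _ (by tauto)

/-- neighbor relation on strictly monotone tuples: differ in exactly one coordinate, by 1 -/
def NbRel {n p : ℕ} (γ δ : {s : Fin p → Fin n // StrictMono s}) : Prop :=
  ∃ k : Fin p, (∀ i, i ≠ k → γ.1 i = δ.1 i) ∧
    ((δ.1 k : ℕ) = (γ.1 k : ℕ) + 1 ∨ (γ.1 k : ℕ) = (δ.1 k : ℕ) + 1)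

def ddist {n p : ℕ} (γ δ : {s : Fin p → Fin n // StrictMono s}) : ℕ :=
  ∑ i : Fin p, (((γ.1 i : ℕ) - (δ.1 i : ℕ)) + ((δ.1 i : ℕ) - (γ.1 i : ℕ)))

lemma nb_step {n p : ℕ} (γ δ : {s : Fin p → Fin n // StrictMono s}) (hne : γ ≠ δ) :
    ∃ γ' : {s : Fin p → Fin n // StrictMono s}, NbRel γ γ' ∧ ddist γ' δ < ddist γ δ := by
  have hvne : ∃ k : Fin p, γ.1 k ≠ δ.1 k := by
    by_contra h
    push_neg at h
    exact hne (Subtype.ext (funext h))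
  by_cases H : ∃ k : Fin p, (γ.1 k : ℕ) < (δ.1 k : ℕ)
  · -- move the largest such coordinate up by one
    set S := Finset.univ.filter (fun k : Fin p => (γ.1 k : ℕ) < (δ.1 k : ℕ)) with hS
    have hSne : S.Nonempty := by
      obtain ⟨k, hk⟩ := H
      exact ⟨k, Finset.mem_filter.mpr ⟨Finset.mem_univ _, hk⟩⟩
    set k := S.max' hSne with hkdef
    have hk1 : (γ.1 k : ℕ) < (δ.1 k : ℕ) :=
      (Finset.mem_filter.mp (S.max'_mem hSne)).2
    have hk2 : ∀ i : Fin p, k < i → (δ.1 i : ℕ) ≤ (γ.1 i : ℕ) := by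
      intro i hi
      by_contra h
      push_neg at h
      have : i ∈ S := Finset.mem_filter.mpr ⟨Finset.mem_univ _, h⟩
      exact absurd (S.le_max' i this) (not_le.mpr hi)
    have hvlt : (γ.1 k : ℕ) + 1 < n := lt_of_le_of_lt (by omega) (δ.1 k).isLt
    set v : Fin n := ⟨(γ.1 k : ℕ) + 1, hvlt⟩ with hv
    have hmono : StrictMono (Function.update γ.1 k v) := by
      intro x y hxy
      rcases eq_or_ne x k with hxk | hx
      · rcases eq_or_ne y k with hyk | hy
        · rw [hxk, hyk] at hxy; exact absurd hxy (lt_irrefl _)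
        · rw [hxk] at hxy ⊢
          rw [Function.update_self, Function.update_of_ne hy]
          have h1 : (δ.1 k : ℕ) < (δ.1 y : ℕ) := δ.2 hxy
          have h2 : (δ.1 y : ℕ) ≤ (γ.1 y : ℕ) := hk2 y hxy
          rw [Fin.lt_def]
          simp only [hv]
          omega
      · rcases eq_or_ne y k with hyk | hy
        · rw [hyk] at hxy ⊢
          rw [Function.update_self, Function.update_of_ne hx]
          have h1 : (γ.1 x : ℕ) < (γ.1 k : ℕ) := γ.2 hxy
          rw [Fin.lt_def]
          simp only [hv]
          omega
        · rw [Function.update_of_ne hx, Function.update_of_ne hy]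
          exact γ.2 hxy
    refine ⟨⟨Function.update γ.1 k v, hmono⟩, ⟨k, ?_, ?_⟩, ?_⟩
    · intro i hi
      exact (Function.update_of_ne hi _ _).symm
    · left
      simp [Function.update_self, hv]
    · apply Finset.sum_lt_sum
      · intro i _
        dsimp only
        rcases eq_or_ne i k with rfl | hi
        · simp only [Function.update_self, hv]
          omega
        · rw [Function.update_of_ne hi]
      · refine ⟨k, Finset.mem_univ _, ?_⟩
        dsimp only
        simp only [Function.update_self, hv]
        omega
  · -- all coordinates satisfy δ ≤ γ; move the smallest strict one down by one
    push_neg at H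
    set S := Finset.univ.filter (fun k : Fin p => (δ.1 k : ℕ) < (γ.1 k : ℕ)) with hS
    have hSne : S.Nonempty := by
      obtain ⟨k, hk⟩ := hvne
      have : (δ.1 k : ℕ) < (γ.1 k : ℕ) := by
        have := H k
        have hne' : (γ.1 k : ℕ) ≠ (δ.1 k : ℕ) := fun h => hk (Fin.val_injective h)
        omega
      exact ⟨k, Finset.mem_filter.mpr ⟨Finset.mem_univ _, this⟩⟩
    set k := S.min' hSne with hkdef
    have hk1 : (δ.1 k : ℕ) < (γ.1 k : ℕ) :=
      (Finset.mem_filter.mp (S.min'_mem hSne)).2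
    have hk2 : ∀ i : Fin p, i < k → (γ.1 i : ℕ) = (δ.1 i : ℕ) := by
      intro i hi
      have h1 : (δ.1 i : ℕ) ≤ (γ.1 i : ℕ) := H i
      by_contra h
      have : i ∈ S := Finset.mem_filter.mpr ⟨Finset.mem_univ _, by omega⟩
      exact absurd (S.min'_le i this) (not_le.mpr hi)
    have hvlt : (γ.1 k : ℕ) - 1 < n := lt_of_le_of_lt (by omega) (γ.1 k).isLt
    set v : Fin n := ⟨(γ.1 k : ℕ) - 1, hvlt⟩ with hv
    have hmono : StrictMono (Function.update γ.1 k v) := by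
      intro x y hxy
      rcases eq_or_ne x k with hxk | hx
      · rcases eq_or_ne y k with hyk | hy
        · rw [hxk, hyk] at hxy; exact absurd hxy (lt_irrefl _)
        · rw [hxk] at hxy ⊢
          rw [Function.update_self, Function.update_of_ne hy]
          have h1 : (γ.1 k : ℕ) < (γ.1 y : ℕ) := γ.2 hxy
          rw [Fin.lt_def]
          simp only [hv]
          omega
      · rcases eq_or_ne y k with hyk | hy
        · rw [hyk] at hxy ⊢
          rw [Function.update_self, Function.update_of_ne hx]
          have h1 : (γ.1 x : ℕ) = (δ.1 x : ℕ) := hk2 x hxy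
          have h2 : (δ.1 x : ℕ) < (δ.1 k : ℕ) := δ.2 hxy
          rw [Fin.lt_def]
          simp only [hv]
          omega
        · rw [Function.update_of_ne hx, Function.update_of_ne hy]
          exact γ.2 hxy
    refine ⟨⟨Function.update γ.1 k v, hmono⟩, ⟨k, ?_, ?_⟩, ?_⟩
    · intro i hi
      exact (Function.update_of_ne hi _ _).symm
    · right
      simp only [Function.update_self, hv]
      omega
    · apply Finset.sum_lt_sum
      · intro i _
        dsimp only
        rcases eq_or_ne i k with rfl | hi
        · simp only [Function.update_self, hv]
          omega
        · rw [Function.update_of_ne hi]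
      · refine ⟨k, Finset.mem_univ _, ?_⟩
        dsimp only
        simp only [Function.update_self, hv]
        omega

/-- If `n ≥ 2` and `A ∈ M⁺` (tridiagonal with positive sub- and
super-diagonal entries), then for every `p ∈ {1,…,n}` the `p`-th additive compound
`A^{[p]}` is Metzler and irreducible (the directed graph with an edge `γ → δ` whenever
`γ ≠ δ` and `A^{[p]}_{γδ} ≠ 0` is strongly connected). -/
theorem stmt13 {n : ℕ} (hn : 2 ≤ n) (A : Matrix (Fin n) (Fin n) ℝ) (hA : InMPlus A)
    (p : ℕ) (hp1 : 1 ≤ p) (hpn : p ≤ n) :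
    (∀ α β : {s : Fin p → Fin n // StrictMono s}, α ≠ β →
      0 ≤ addCompound p A α β) ∧
    (∀ α β : {s : Fin p → Fin n // StrictMono s}, α ≠ β →
      Relation.TransGen (fun γ δ : {s : Fin p → Fin n // StrictMono s} =>
        γ ≠ δ ∧ addCompound p A γ δ ≠ 0) α β) := by
  constructor
  · intro α β hne
    exact addCompound_nonneg hA α β hne
  · intro α β hne
    have edge : ∀ γ δ : {s : Fin p → Fin n // StrictMono s}, NbRel γ δ →
        (γ ≠ δ ∧ addCompound p A γ δ ≠ 0) := by
      rintro γ δ ⟨k, hk, hadj⟩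
      refine ⟨?_, ne_of_gt (addCompound_pos hA γ δ k hk hadj)⟩
      intro h
      rw [h] at hadj
      omega
    have key : ∀ m : ℕ, ∀ γ : {s : Fin p → Fin n // StrictMono s}, γ ≠ β → ddist γ β = m →
        Relation.TransGen (fun γ δ : {s : Fin p → Fin n // StrictMono s} =>
          γ ≠ δ ∧ addCompound p A γ δ ≠ 0) γ β := by
      intro m
      induction m using Nat.strong_induction_on with
      | _ m ih =>
        intro γ hγ hd
        obtain ⟨γ', hnb, hlt⟩ := nb_step γ β hγ
        rcases eq_or_ne γ' β with rfl | hγ'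
        · exact Relation.TransGen.single (edge _ _ hnb)
        · exact Relation.TransGen.head (edge _ _ hnb) (ih _ (hd ▸ hlt) γ' hγ' rfl)
    exact key _ α hne rfl


end
end
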